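/- The retarded-time function u is smooth on the region Ω = {x : r(x) > 0} (the complement of the world line), and its gradient satisfies ∂u/∂x^a = −k_a for a = 0,1,2,3, where k_a = η_{ab}k^b. -/

import Mathlib

open scoped BigOperators

noncomputable section

/-- The Minkowski metric η = diag(−1,1,1,1) on ℝ⁴. -/
def eta (i j : Fin 4) : ℝ := if i = j then (if i = 0 then -1 else 1) else 0

/-- Minkowski inner product a·b = η_{ij} a^i b^j. -/
def mdot (a b : Fin 4 → ℝ) : ℝ := ∑ i, ∑ j, eta i j * a i * b j

/-- Lowering an index with η : k_i = η_{ij} k^j. -/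
def lo (a : Fin 4 → ℝ) (i : Fin 4) : ℝ := ∑ j, eta i j * a j

/- Auxiliary material -/

abbrev E4 := Fin 4 → ℝ
abbrev P4 := ℝ × E4

def cfst : P4 →L[ℝ] ℝ := ContinuousLinearMap.fst ℝ ℝ E4
def cprj (i : Fin 4) : P4 →L[ℝ] ℝ :=
  (ContinuousLinearMap.proj i).comp (ContinuousLinearMap.snd ℝ ℝ E4)
def Dc (v : ℝ → E4) (τ : ℝ) (i : Fin 4) : P4 →L[ℝ] ℝ := cprj i - v τ i • cfst
def LF (z v : ℝ → E4) (τ : ℝ) (x : E4) : P4 →L[ℝ] ℝ :=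
  ∑ i, ∑ j, eta i j • ((x i - z τ i) • Dc v τ j + (x j - z τ j) • Dc v τ i)
def Ffun (z : ℝ → E4) (p : P4) : ℝ := mdot (p.2 - z p.1) (p.2 - z p.1)

lemma hasFDerivAt_coord (z v : ℝ → E4)
    (hv : ∀ τ i, v τ i = deriv (fun t => z t i) τ)
    (hz : ContDiff ℝ (⊤ : ℕ∞) z) (τ : ℝ) (x : E4) (i : Fin 4) :
    HasFDerivAt (fun p : P4 => p.2 i - z p.1 i) (Dc v τ i) (τ, x) := by
  have h1 : HasFDerivAt (fun p : P4 => p.2 i) (cprj i) (τ, x) := (cprj i).hasFDerivAt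
  have hzd : HasDerivAt (fun t => z t i) (v τ i) τ := by
    rw [hv]
    exact ((contDiff_pi.1 hz i).differentiable
      (by simp)).differentiableAt.hasDerivAt
  have h2 : HasFDerivAt (fun p : P4 => z p.1 i) (v τ i • cfst) (τ, x) :=
    by have := hzd.comp_hasFDerivAt (τ, x) cfst.hasFDerivAt; exact this
  exact h1.sub h2

lemma hasFDerivAt_F (z v : ℝ → E4)
    (hv : ∀ τ i, v τ i = deriv (fun t => z t i) τ)
    (hz : ContDiff ℝ (⊤ : ℕ∞) z) (τ : ℝ) (x : E4) :
    HasFDerivAt (Ffun z) (LF z v τ x) (τ, x) := by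
  have h : HasFDerivAt
      (fun p : P4 => ∑ i, ∑ j, eta i j * (p.2 i - z p.1 i) * (p.2 j - z p.1 j))
      (LF z v τ x) (τ, x) := by
    apply HasFDerivAt.fun_sum
    intro i _
    apply HasFDerivAt.fun_sum
    intro j _
    have := (((hasFDerivAt_coord z v hv hz τ x i).mul
      (hasFDerivAt_coord z v hv hz τ x j)).const_mul (eta i j))
    simpa [mul_assoc, Pi.sub_apply] using this
  have hfe : Ffun z = fun p : P4 =>
      ∑ i, ∑ j, eta i j * (p.2 i - z p.1 i) * (p.2 j - z p.1 j) := by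
    funext p; simp [Ffun, mdot]
  rw [hfe]; exact h

lemma LF_apply (z v : ℝ → E4) (τ : ℝ) (x : E4) (q : P4) :
    LF z v τ x q = ∑ i, ∑ j, eta i j *
      ((x i - z τ i) * (q.2 j - v τ j * q.1) + (x j - z τ j) * (q.2 i - v τ i * q.1)) := by
  simp [LF, Dc, cprj, cfst, ContinuousLinearMap.sum_apply, smul_eq_mul, mul_add]

lemma LF_one_zero (z v : ℝ → E4) (τ : ℝ) (x : E4) :
    LF z v τ x (1, 0) = -2 * mdot (v τ) (x - z τ) := by
  rw [LF_apply]
  simp only [mdot, Fin.sum_univ_four, Pi.sub_apply, Pi.zero_apply]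
  simp (config := { decide := true }) [eta]
  ring

lemma LF_single (z v : ℝ → E4) (τ : ℝ) (x : E4) (a : Fin 4) :
    LF z v τ x (0, Pi.single a 1) = 2 * lo (x - z τ) a := by
  rw [LF_apply]
  fin_cases a <;>
  · simp only [lo, Fin.sum_univ_four, Pi.sub_apply, Pi.single_apply]
    simp (config := { decide := true }) [eta]
    ring

lemma L_decomp (L : P4 →L[ℝ] ℝ) (q : P4) : L q = q.1 * L (1, 0) + L (0, q.2) := by
  have h : q = q.1 • ((1:ℝ), (0:E4)) + ((0:ℝ), q.2) := by simp [Prod.ext_iff]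
  conv_lhs => rw [h]
  rw [map_add, map_smul, smul_eq_mul]

def prodEquiv (L : P4 →L[ℝ] ℝ) (hc : L (1, 0) ≠ 0) : P4 ≃L[ℝ] ℝ × E4 :=
  ContinuousLinearEquiv.equivOfInverse
    (L.prod (ContinuousLinearMap.snd ℝ ℝ E4))
    ((((L (1, 0))⁻¹ • (ContinuousLinearMap.fst ℝ ℝ E4 -
        (L.comp (ContinuousLinearMap.inr ℝ ℝ E4)).comp
          (ContinuousLinearMap.snd ℝ ℝ E4)))).prod (ContinuousLinearMap.snd ℝ ℝ E4))
    (fun p => by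
      have hd := L_decomp L p
      ext
      · simp only [ContinuousLinearMap.prod_apply, ContinuousLinearMap.smul_apply,
          ContinuousLinearMap.sub_apply, ContinuousLinearMap.coe_fst',
          ContinuousLinearMap.coe_comp', Function.comp_apply,
          ContinuousLinearMap.coe_snd', ContinuousLinearMap.inr_apply, smul_eq_mul]
        rw [hd]; field_simp
        ring
      · simp)
    (fun q => by
      ext
      · simp only [ContinuousLinearMap.prod_apply, ContinuousLinearMap.smul_apply,
          ContinuousLinearMap.sub_apply, ContinuousLinearMap.coe_fst',
          ContinuousLinearMap.coe_comp', Function.comp_apply,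
          ContinuousLinearMap.coe_snd', ContinuousLinearMap.inr_apply, smul_eq_mul]
        rw [L_decomp L (_, _)]
        simp only [ContinuousLinearMap.inr_apply]
        field_simp
        ring
      · simp)

lemma prodEquiv_coe (L : P4 →L[ℝ] ℝ) (hc : L (1, 0) ≠ 0) :
    (prodEquiv L hc : P4 →L[ℝ] ℝ × E4) = L.prod (ContinuousLinearMap.snd ℝ ℝ E4) := rfl

lemma contDiff_F (z : ℝ → E4) (hz : ContDiff ℝ (⊤ : ℕ∞) z) :
    ContDiff ℝ (⊤ : ℕ∞) (Ffun z) := by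
  have hco : ∀ i : Fin 4, ContDiff ℝ (⊤ : ℕ∞) (fun p : P4 => p.2 i - z p.1 i) := fun i =>
    (((ContinuousLinearMap.proj i (R := ℝ) (φ := fun _ : Fin 4 => ℝ)).contDiff).comp
      contDiff_snd).sub ((contDiff_pi.1 hz i).comp contDiff_fst)
  have h : ContDiff ℝ (⊤ : ℕ∞)
      (fun p : P4 => ∑ i, ∑ j, eta i j * (p.2 i - z p.1 i) * (p.2 j - z p.1 j)) := by
    apply ContDiff.sum; intro i _
    apply ContDiff.sum; intro j _
    exact (contDiff_const.mul (hco i)).mul (hco j)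
  have hfe : Ffun z = fun p : P4 =>
      ∑ i, ∑ j, eta i j * (p.2 i - z p.1 i) * (p.2 j - z p.1 j) := by
    funext p; simp [Ffun, mdot]
  rw [hfe]; exact h

lemma lo_smul' (c : ℝ) (y : E4) (a : Fin 4) : lo (c • y) a = c * lo y a := by
  simp only [lo, Finset.mul_sum, Pi.smul_apply, smul_eq_mul]
  exact Finset.sum_congr rfl fun j _ => by ring

lemma time_pos (w : E4) (hnull : mdot w w = 0) (h0 : 0 ≤ w 0)
    (vv : E4) (hrpos : 0 < -mdot vv w) : 0 < w 0 := by
  by_contra h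
  push_neg at h
  have h00 : w 0 = 0 := le_antisymm h h0
  have hnull' : w 1 * w 1 + w 2 * w 2 + w 3 * w 3 = 0 := by
    simp only [mdot, Fin.sum_univ_four] at hnull
    simp (config := { decide := true }) [eta] at hnull
    nlinarith [hnull, h00]
  have h1 : w 1 = 0 := by nlinarith [mul_self_nonneg (w 1), mul_self_nonneg (w 2), mul_self_nonneg (w 3)]
  have h2 : w 2 = 0 := by nlinarith [mul_self_nonneg (w 1), mul_self_nonneg (w 2), mul_self_nonneg (w 3)]
  have h3 : w 3 = 0 := by nlinarith [mul_self_nonneg (w 1), mul_self_nonneg (w 2), mul_self_nonneg (w 3)]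
  have : mdot vv w = 0 := by
    simp only [mdot, Fin.sum_univ_four]
    simp (config := { decide := true }) [eta, h00, h1, h2, h3]
  rw [this] at hrpos
  norm_num at hrpos

/-- The retarded time `u` is smooth on the region Ω = {x | r x > 0} and its
gradient is `∂u/∂x^a = −k_a`. -/
theorem retarded_time_smooth_gradient
    (z : ℝ → Fin 4 → ℝ) (hz : ContDiff ℝ (⊤ : ℕ∞) z)
    (v : ℝ → Fin 4 → ℝ) (hv : ∀ τ i, v τ i = deriv (fun t => z t i) τ)
    (hunit : ∀ τ, mdot (v τ) (v τ) = -1)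
    (hfut : ∀ τ, 0 < v τ 0)
    (u : (Fin 4 → ℝ) → ℝ)
    (hu : ∀ x, mdot (x - z (u x)) (x - z (u x)) = 0 ∧ z (u x) 0 ≤ x 0)
    (huniq : ∀ x τ, mdot (x - z τ) (x - z τ) = 0 → z τ 0 ≤ x 0 → τ = u x)
    (r : (Fin 4 → ℝ) → ℝ)
    (hr : ∀ x, r x = -mdot (v (u x)) (x - z (u x)))
    (k : (Fin 4 → ℝ) → Fin 4 → ℝ)
    (hk : ∀ x, k x = (r x)⁻¹ • (x - z (u x))) :
    ContDiffOn ℝ (⊤ : ℕ∞) u {x | 0 < r x} ∧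
    ∀ x ∈ {x : Fin 4 → ℝ | 0 < r x}, ∀ a : Fin 4,
      fderiv ℝ u x (Pi.single a 1) = -(lo (k x) a) := by
  have hn : (1 : ℕ∞) ≤ (⊤ : ℕ∞) := le_top
  -- main smoothness claim
  have key : ∀ x₀ ∈ {x : Fin 4 → ℝ | 0 < r x}, ContDiffAt ℝ (⊤ : ℕ∞) u x₀ := by
    intro x₀ hx₀
    have hRpos : 0 < r x₀ := hx₀
    set τ₀ := u x₀ with hτ₀
    have hmv : mdot (v τ₀) (x₀ - z τ₀) = -r x₀ := by
      have := hr x₀; linarith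
    set L := LF z v τ₀ x₀ with hL
    have hc : L (1, 0) = 2 * r x₀ := by
      rw [hL, LF_one_zero, hmv]; ring
    have hc0 : L (1, 0) ≠ 0 := by rw [hc]; positivity
    set e := prodEquiv L hc0 with he
    set G := fun p : P4 => (Ffun z p, p.2) with hG
    have hGc : ContDiffAt ℝ (⊤ : ℕ∞) G (τ₀, x₀) :=
      ((contDiff_F z hz).prodMk contDiff_snd).contDiffAt
    have hGf : HasFDerivAt G (e : P4 →L[ℝ] ℝ × E4) (τ₀, x₀) := by
      rw [he, prodEquiv_coe]
      exact (hasFDerivAt_F z v hv hz τ₀ x₀).prodMk hasFDerivAt_snd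
    have hS : HasStrictFDerivAt G (e : P4 →L[ℝ] ℝ × E4) (τ₀, x₀) :=
      hGc.hasStrictFDerivAt' hGf (by simp)
    set inv := hS.localInverse G e (τ₀, x₀) with hinvdef
    have hGp0 : G (τ₀, x₀) = ((0:ℝ), x₀) := by
      have h0 := (hu x₀).1
      simp only [hG, Ffun]
      exact Prod.ext h0 rfl
    have hri : ∀ᶠ q in nhds ((0:ℝ), x₀), G (inv q) = q := hGp0 ▸ hS.eventually_right_inverse
    have hcont : ContinuousAt inv ((0:ℝ), x₀) := hGp0 ▸ hS.localInverse_continuousAt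
    have hinv0 : inv ((0:ℝ), x₀) = (τ₀, x₀) := hGp0 ▸ hS.localInverse_apply_image
    have hinvCD : ContDiffAt ℝ (⊤ : ℕ∞) inv ((0:ℝ), x₀) :=
      hGp0 ▸ hGc.to_localInverse hGf (by simp)
    -- positivity of time component
    have hy0 : 0 < x₀ 0 - z τ₀ 0 := by
      have := time_pos (x₀ - z τ₀) (hu x₀).1
        (by have := (hu x₀).2; simp [Pi.sub_apply]; linarith)
        (v τ₀) (by rw [hmv]; simpa using hRpos)
      simpa [Pi.sub_apply] using this
    -- the inclusion map
    have hι : Filter.Tendsto (fun x' : E4 => (((0:ℝ), x') : ℝ × E4)) (nhds x₀)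
        (nhds ((0:ℝ), x₀)) :=
      (continuous_const.prodMk continuous_id).continuousAt
    have h1 : ∀ᶠ x' in nhds x₀, G (inv ((0:ℝ), x')) = ((0:ℝ), x') := hι.eventually hri
    -- eventually z((inv (0,x')).1) 0 < x' 0
    have hcont2 : ContinuousAt (fun x' : E4 => z ((inv ((0:ℝ), x')).1) 0) x₀ := by
      have hzc : Continuous (fun t : ℝ => z t 0) := (continuous_apply 0).comp hz.continuous
      exact hzc.continuousAt.comp ((continuousAt_fst).comp (hcont.comp hι))
    have hcont3 : ContinuousAt (fun x' : E4 => x' 0) x₀ := (continuous_apply 0).continuousAt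
    have h2 : ∀ᶠ x' in nhds x₀, z ((inv ((0:ℝ), x')).1) 0 < x' 0 := by
      apply hcont2.eventually_lt hcont3
      simp only [hinv0]
      linarith
    have hev : u =ᶠ[nhds x₀] fun x' => (inv ((0:ℝ), x')).1 := by
      filter_upwards [h1, h2] with x' hG1 hlt
      have hsnd : (inv ((0:ℝ), x')).2 = x' := by
        have := congrArg Prod.snd hG1; simpa [hG] using this
      have hFz : Ffun z (inv ((0:ℝ), x')) = 0 := by
        have := congrArg Prod.fst hG1; simpa [hG] using this
      have hnull : mdot (x' - z ((inv ((0:ℝ), x')).1)) (x' - z ((inv ((0:ℝ), x')).1)) = 0 := by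
        have : Ffun z ((inv ((0:ℝ), x')).1, x') = 0 := by
          rw [show ((inv ((0:ℝ), x')).1, x') = inv ((0:ℝ), x') from Prod.ext rfl hsnd.symm]
          exact hFz
        simpa [Ffun] using this
      exact (huniq x' _ hnull (le_of_lt hlt)).symm
    have hg : ContDiffAt ℝ (⊤ : ℕ∞) (fun x' : E4 => (inv ((0:ℝ), x')).1) x₀ := by
      have hincl : ContDiffAt ℝ (⊤ : ℕ∞) (fun x' : E4 => (((0:ℝ), x') : ℝ × E4)) x₀ :=
        (contDiff_const.prodMk contDiff_id).contDiffAt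
      exact contDiff_fst.contDiffAt.comp x₀ (hinvCD.comp x₀ hincl)
    exact hg.congr_of_eventuallyEq hev
  refine ⟨fun x hx => (key x hx).contDiffWithinAt, ?_⟩
  -- gradient
  intro x₀ hx₀ a
  have hRpos : 0 < r x₀ := hx₀
  set τ₀ := u x₀ with hτ₀
  have hmv : mdot (v τ₀) (x₀ - z τ₀) = -r x₀ := by
    have := hr x₀; linarith
  have hCD := key x₀ hx₀
  have hdiff : DifferentiableAt ℝ u x₀ := hCD.differentiableAt (by simp)
  have hDu : HasFDerivAt u (fderiv ℝ u x₀) x₀ := hdiff.hasFDerivAt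
  have hφ : HasFDerivAt (fun x' : E4 => ((u x', x') : P4))
      ((fderiv ℝ u x₀).prod (ContinuousLinearMap.id ℝ E4)) x₀ :=
    hDu.prodMk (hasFDerivAt_id x₀)
  have hcomp := HasFDerivAt.comp (f := fun x' : E4 => ((u x', x') : P4)) x₀ (hasFDerivAt_F z v hv hz τ₀ x₀) hφ
  have hcomp' : HasFDerivAt (fun x' : E4 => Ffun z (u x', x'))
      ((LF z v τ₀ x₀).comp ((fderiv ℝ u x₀).prod (ContinuousLinearMap.id ℝ E4))) x₀ := hcomp
  have hzero : (fun x' : E4 => Ffun z (u x', x')) = fun _ => (0:ℝ) :=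
    funext fun x' => by simpa [Ffun] using (hu x').1
  have hconst : HasFDerivAt (fun x' : E4 => Ffun z (u x', x')) (0 : E4 →L[ℝ] ℝ) x₀ := by
    rw [hzero]; exact hasFDerivAt_const 0 x₀
  have hL0 : (LF z v τ₀ x₀).comp ((fderiv ℝ u x₀).prod (ContinuousLinearMap.id ℝ E4)) = 0 :=
    hcomp'.unique hconst
  have happ := congrArg (fun T : E4 →L[ℝ] ℝ => T (Pi.single a 1)) hL0
  simp only [ContinuousLinearMap.coe_comp', Function.comp_apply,
    ContinuousLinearMap.prod_apply, ContinuousLinearMap.coe_id', id_eq,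
    ContinuousLinearMap.zero_apply] at happ
  rw [L_decomp] at happ
  simp only [LF_one_zero, LF_single] at happ
  rw [hmv] at happ
  set d := fderiv ℝ u x₀ (Pi.single a 1) with hd
  have hklo : lo (k x₀) a = (r x₀)⁻¹ * lo (x₀ - z τ₀) a := by
    rw [hk x₀, lo_smul']
  rw [hklo]
  have hr0 : r x₀ ≠ 0 := ne_of_gt hRpos
  field_simp
  nlinarith [happ]
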